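/- Let u : W → ℝ be graph-harmonic on W and let ρ : ℝ^d → [0, ∞) be any nonnegative function. Then Σ_{x∈W} Σ_{y∈W, y~x} ((ρ(x)² + ρ(y)²)/4)·(u(x) − u(y))² ≤ Σ_{x∈W} Σ_{y∈W, y~x} (ρ(x) − ρ(y))²·(u(x) + u(y))². -/

import Mathlib

attribute [local instance] Classical.propDecidable

/-- Cutoff inequality at the heart of the discrete Caccioppoli estimate: if `u` is
graph-harmonic on `W` and `ρ ≥ 0`, then
`Σ_{x}Σ_{y~x} ((ρ(x)² + ρ(y)²)/4)(u(x)−u(y))² ≤ Σ_{x}Σ_{y~x} (ρ(x)−ρ(y))²(u(x)+u(y))²`. -/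
theorem cutoff_inequality (d : ℕ) (hd : 2 ≤ d)
    (W : Finset (EuclideanSpace ℝ (Fin d)))
    (u : EuclideanSpace ℝ (Fin d) → ℝ)
    (hu : ∀ x ∈ W, ∑ y ∈ W.filter (fun y => y ≠ x ∧ dist x y ≤ 1), (u y - u x) = 0)
    (ρ : EuclideanSpace ℝ (Fin d) → ℝ) (hρ : ∀ x, 0 ≤ ρ x) :
    ∑ x ∈ W, ∑ y ∈ W.filter (fun y => y ≠ x ∧ dist x y ≤ 1),
        ((ρ x ^ 2 + ρ y ^ 2) / 4) * (u x - u y) ^ 2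
      ≤ ∑ x ∈ W, ∑ y ∈ W.filter (fun y => y ≠ x ∧ dist x y ≤ 1),
          (ρ x - ρ y) ^ 2 * (u x + u y) ^ 2 := by
  have swap : ∀ f : EuclideanSpace ℝ (Fin d) → EuclideanSpace ℝ (Fin d) → ℝ,
      ∑ x ∈ W, ∑ y ∈ W.filter (fun y => y ≠ x ∧ dist x y ≤ 1), f x y
    = ∑ x ∈ W, ∑ y ∈ W.filter (fun y => y ≠ x ∧ dist x y ≤ 1), f y x := by
    intro f
    refine Finset.sum_comm' (fun x y => ?_)
    simp only [Finset.mem_filter]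
    constructor
    · rintro ⟨hx, hy, hne, hdist⟩
      exact ⟨⟨hx, hne.symm, by rwa [dist_comm]⟩, hy⟩
    · rintro ⟨⟨hx, hne, hdist⟩, hy⟩
      exact ⟨hx, hy, hne.symm, by rwa [dist_comm]⟩
  have h1 : ∑ x ∈ W, ∑ y ∈ W.filter (fun y => y ≠ x ∧ dist x y ≤ 1),
      ρ x ^ 2 * u x * (u y - u x) = 0 := by
    apply Finset.sum_eq_zero
    intro x hx
    rw [← Finset.mul_sum, hu x hx, mul_zero]
  have h2 : ∑ x ∈ W, ∑ y ∈ W.filter (fun y => y ≠ x ∧ dist x y ≤ 1),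
      ρ y ^ 2 * u y * (u x - u y) = 0 := by
    rw [swap (fun x y => ρ y ^ 2 * u y * (u x - u y))]
    exact h1
  calc ∑ x ∈ W, ∑ y ∈ W.filter (fun y => y ≠ x ∧ dist x y ≤ 1),
        ((ρ x ^ 2 + ρ y ^ 2) / 4) * (u x - u y) ^ 2
      = ∑ x ∈ W, ∑ y ∈ W.filter (fun y => y ≠ x ∧ dist x y ≤ 1),
        (((ρ x ^ 2 + ρ y ^ 2) / 4) * (u x - u y) ^ 2
          + (ρ x ^ 2 * u x * (u y - u x) + ρ y ^ 2 * u y * (u x - u y))) := by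
        simp only [Finset.sum_add_distrib]
        rw [h1, h2]
        ring
    _ ≤ ∑ x ∈ W, ∑ y ∈ W.filter (fun y => y ≠ x ∧ dist x y ≤ 1),
        (ρ x - ρ y) ^ 2 * (u x + u y) ^ 2 := by
        refine Finset.sum_le_sum fun x _ => Finset.sum_le_sum fun y _ => ?_
        have key : (ρ x - ρ y) ^ 2 * (u x + u y) ^ 2
            - (((ρ x ^ 2 + ρ y ^ 2) / 4) * (u x - u y) ^ 2
              + (ρ x ^ 2 * u x * (u y - u x) + ρ y ^ 2 * u y * (u x - u y)))
          = (((ρ x + ρ y) * (u x - u y) + 2 * (ρ x - ρ y) * (u x + u y)) ^ 2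
              + 4 * ((ρ x - ρ y) * (u x + u y)) ^ 2
              + ((ρ x - ρ y) * (u x - u y)) ^ 2) / 8 := by ring
        nlinarith [sq_nonneg ((ρ x + ρ y) * (u x - u y) + 2 * (ρ x - ρ y) * (u x + u y)),
          sq_nonneg ((ρ x - ρ y) * (u x + u y)),
          sq_nonneg ((ρ x - ρ y) * (u x - u y))]
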